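/- Let p be a positive integer, let K : ℝ^p → ℝ be nonnegative, spherically symmetric, with ∫ (1 + ‖u‖₂⁶) K(u) du < ∞, and set μ₂ = ∫ u₁² K(u) du. Let m : ℝ^p → ℝ be four times continuously differentiable with bounded derivatives up to order four, and let f : ℝ^p → ℝ be twice continuously differentiable with bounded derivatives up to order two. Fix x ∈ ℝ^p. Then, as h → 0⁺, ∫_{ℝ^p} [ m(x + h u) − m(x) − h ∇m(x)ᵀ u ] K(u) f(x + h u) du = (h²/2) μ₂ f(x) Tr(∇²m(x)) + O(h⁴), where ∇²m(x) is the Hessian of m at x. -/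

import Mathlib

open MeasureTheory

section helpers
variable {E : Type*} [NormedAddCommGroup E] [NormedSpace ℝ E]

lemma line_hasDerivAt (g : E → ℝ) {N : WithTop ℕ∞} (hg : ContDiff ℝ N g)
    (x v : E) {j : ℕ} (hj : (j : WithTop ℕ∞) < N) (t : ℝ) :
    HasDerivAt (fun t : ℝ => iteratedFDeriv ℝ j g (x + t • v) (fun _ => v))
      (iteratedFDeriv ℝ (j + 1) g (x + t • v) (fun _ => v)) t := by
  have hc : HasDerivAt (fun t : ℝ => x + t • v) v t := by
    simpa using ((hasDerivAt_id t).smul_const v).const_add x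
  have hdiff : DifferentiableAt ℝ (iteratedFDeriv ℝ j g) (x + t • v) :=
    (hg.differentiable_iteratedFDeriv hj).differentiableAt
  have h1 : HasDerivAt (fun t : ℝ => iteratedFDeriv ℝ j g (x + t • v))
      (fderiv ℝ (iteratedFDeriv ℝ j g) (x + t • v) v) t :=
    hdiff.hasFDerivAt.comp_hasDerivAt t hc
  have h2 := ((ContinuousMultilinearMap.apply ℝ (fun _ : Fin j => E) ℝ
      (fun _ => v)).hasFDerivAt).comp_hasDerivAt t h1
  have h3 : (fderiv ℝ (iteratedFDeriv ℝ j g) (x + t • v) v) (fun _ => v)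
      = iteratedFDeriv ℝ (j + 1) g (x + t • v) (fun _ => v) := by
    rw [iteratedFDeriv_succ_apply_left]
    congr 1
  simpa [Function.comp_def, ContinuousMultilinearMap.apply_apply, h3] using h2

/-- Quantitative Taylor estimate along a segment. -/
lemma taylor_line (g : E → ℝ) (n : ℕ) (hg : ContDiff ℝ (n + 1 : ℕ) g) {C : ℝ}
    (hC : ∀ y, ‖iteratedFDeriv ℝ (n + 1) g y‖ ≤ C) (x v : E) :
    |g (x + v) - ∑ j ∈ Finset.range (n + 1),
        (↑(Nat.factorial j))⁻¹ * iteratedFDeriv ℝ j g x (fun _ => v)|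
      ≤ C * ‖v‖ ^ (n + 1) / Nat.factorial n := by
  set s : Set ℝ := Set.Icc (0 : ℝ) 1 with hs
  have hus : UniqueDiffOn ℝ s := uniqueDiffOn_Icc (by norm_num)
  set φ : ℝ → ℝ := fun t => g (x + t • v) with hφ
  set ψ : ℕ → ℝ → ℝ := fun j t => iteratedFDeriv ℝ j g (x + t • v) (fun _ => v) with hψ
  have hφc : ContDiff ℝ (n + 1 : ℕ) φ := by
    apply hg.comp
    exact contDiff_const.add (contDiff_id.smul contDiff_const)
  have key : ∀ j : ℕ, j ≤ n + 1 → ∀ t ∈ s, iteratedDerivWithin j φ s t = ψ j t := by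
    intro j
    induction j with
    | zero =>
      intro _ t _
      simp [ψ, φ, iteratedDerivWithin_zero, iteratedFDeriv_zero_apply]
    | succ j ih =>
      intro hj t ht
      rw [iteratedDerivWithin_succ]
      have hEq : Set.EqOn (iteratedDerivWithin j φ s) (ψ j) s := fun y hy =>
        ih (le_trans (Nat.le_succ j) hj) y hy
      rw [derivWithin_congr hEq (hEq ht)]
      have hd : HasDerivAt (ψ j) (ψ (j + 1) t) t := by
        apply line_hasDerivAt g hg x v _ t
        exact_mod_cast (by exact_mod_cast Nat.lt_of_lt_of_le (Nat.lt_succ_self j) hj :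
          (j : ℕ) < n + 1)
      exact (hd.hasDerivWithinAt).derivWithin (hus t ht)
  have hbound : ∀ y ∈ s, ‖iteratedDerivWithin (n + 1) φ s y‖ ≤ C * ‖v‖ ^ (n + 1) := by
    intro y hy
    rw [key (n + 1) le_rfl y hy]
    calc ‖ψ (n + 1) y‖ ≤ ‖iteratedFDeriv ℝ (n + 1) g (x + y • v)‖ * ∏ _i : Fin (n + 1), ‖v‖ :=
          ContinuousMultilinearMap.le_opNorm _ _
      _ ≤ C * ‖v‖ ^ (n + 1) := by
          rw [Finset.prod_const, Finset.card_univ, Fintype.card_fin]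
          have h0 : (0 : ℝ) ≤ ‖v‖ ^ (n + 1) := by positivity
          exact mul_le_mul_of_nonneg_right (hC _) h0
  have hmem : (1 : ℝ) ∈ s := by simp [s]
  have := taylor_mean_remainder_bound (f := φ) (a := 0) (b := 1) (n := n)
    (by norm_num) (hφc.contDiffOn) hmem hbound
  rw [taylor_within_apply] at this
  have h1 : φ 1 = g (x + v) := by simp [φ]
  have h2 : ∀ j ∈ Finset.range (n + 1),
      ((↑(Nat.factorial j) : ℝ)⁻¹ * (1 - 0) ^ j) • iteratedDerivWithin j φ s 0
        = (↑(Nat.factorial j) : ℝ)⁻¹ * iteratedFDeriv ℝ j g x (fun _ => v) := by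
    intro j hj
    rw [key j (Finset.mem_range.mp hj).le 0 (by simp [s])]
    simp [ψ, smul_eq_mul]
  rw [Finset.sum_congr rfl h2, h1] at this
  simpa using this

end helpers

lemma integral_flip_eq {p : ℕ} (i : Fin p) (F : (Fin p → ℝ) → ℝ) :
    ∫ u : Fin p → ℝ, F (fun l => if l = i then -(u l) else u l) = ∫ u, F u := by
  classical
  set e : ∀ _ : Fin p, ℝ ≃ᵐ ℝ :=
    fun l => if l = i then MeasurableEquiv.neg ℝ else MeasurableEquiv.refl ℝ with he
  set T : (Fin p → ℝ) ≃ᵐ (Fin p → ℝ) := MeasurableEquiv.piCongrRight e with hT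
  have hTP : MeasurePreserving T volume volume := by
    have h := volume_preserving_pi (f := fun l (a : ℝ) => e l a) (fun l => by
      by_cases h : l = i
      · simpa [e, h] using Measure.measurePreserving_neg (volume : Measure ℝ)
      · simp only [e, if_neg h]
        exact MeasurePreserving.id (volume : Measure ℝ))
    convert h using 1 <;> rfl
  have h := hTP.integral_comp T.measurableEmbedding F
  have hc : ∀ u : Fin p → ℝ, T u = fun l => if l = i then -(u l) else u l := by
    intro u; funext l
    by_cases hl : l = i <;>
      simp [T, e, hl, MeasurableEquiv.piCongrRight, Equiv.piCongrRight]
  simpa [hc] using h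

lemma integral_perm_eq {p : ℕ} (σ : Equiv.Perm (Fin p)) (F : (Fin p → ℝ) → ℝ) :
    ∫ u : Fin p → ℝ, F (fun l => u (σ.symm l)) = ∫ u, F u := by
  set T : (Fin p → ℝ) ≃ᵐ (Fin p → ℝ) :=
    MeasurableEquiv.arrowCongr' σ (MeasurableEquiv.refl ℝ) with hT
  have hTP : MeasurePreserving T volume volume := by
    have h := measurePreserving_arrowCongr' (fun _ : Fin p => (volume : Measure ℝ))
      (fun _ : Fin p => (volume : Measure ℝ)) σ (MeasurableEquiv.refl ℝ)
      (fun _ => MeasurePreserving.id _)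
    rw [volume_pi]
    exact h
  have h := hTP.integral_comp T.measurableEmbedding F
  have hc : ∀ u : Fin p → ℝ, T u = fun l => u (σ.symm l) := by
    intro u; funext l
    simp [T, MeasurableEquiv.arrowCongr', Equiv.arrowCongr', Equiv.arrowCongr]
  simpa [hc] using h

lemma integral_odd {p : ℕ} (F : (Fin p → ℝ) → ℝ) (hodd : ∀ u, F (-u) = -F u) :
    ∫ u, F u = 0 := by
  have h := integral_neg_eq_self F (volume : Measure (Fin p → ℝ))
  simp only [hodd] at h
  rw [integral_neg] at h
  linarith

lemma integral_sq_coord {p : ℕ} (hp : 0 < p) (K : (Fin p → ℝ) → ℝ) (k : ℝ → ℝ)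
    (hK_sym : ∀ u, K u = k (Real.sqrt (∑ i, u i ^ 2))) (i : Fin p) :
    ∫ u : Fin p → ℝ, u i ^ 2 * K u = ∫ u : Fin p → ℝ, u ⟨0, hp⟩ ^ 2 * K u := by
  classical
  set i0 : Fin p := ⟨0, hp⟩
  set σ : Equiv.Perm (Fin p) := Equiv.swap i i0 with hσ
  have h := integral_perm_eq σ (fun u => u i0 ^ 2 * K u)
  have hc : ∀ u : Fin p → ℝ,
      (fun l => u (σ.symm l)) i0 ^ 2 * K (fun l => u (σ.symm l)) = u i ^ 2 * K u := by
    intro u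
    have h1 : (fun l => u (σ.symm l)) i0 = u i := by
      simp [σ, Equiv.symm_swap, Equiv.swap_apply_right]
    have h2 : K (fun l => u (σ.symm l)) = K u := by
      rw [hK_sym, hK_sym]
      congr 2
      exact Equiv.sum_comp σ.symm (fun l => u l ^ 2)
    rw [h1, h2]
  calc ∫ u : Fin p → ℝ, u i ^ 2 * K u
      = ∫ u : Fin p → ℝ, (fun l => u (σ.symm l)) i0 ^ 2 * K (fun l => u (σ.symm l)) := by
        simp only [hc]
    _ = ∫ u : Fin p → ℝ, u i0 ^ 2 * K u := by
        exact integral_perm_eq σ (fun v => v i0 ^ 2 * K v)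
    _ = ∫ u : Fin p → ℝ, u ⟨0, hp⟩ ^ 2 * K u := rfl

lemma integral_offdiag {p : ℕ} (K : (Fin p → ℝ) → ℝ) (k : ℝ → ℝ)
    (hK_sym : ∀ u, K u = k (Real.sqrt (∑ i, u i ^ 2))) {i j : Fin p} (hij : i ≠ j) :
    ∫ u : Fin p → ℝ, u i * u j * K u = 0 := by
  classical
  have h := integral_flip_eq i (fun u => u i * u j * K u)
  have hc : ∀ u : Fin p → ℝ,
      (fun l => if l = i then -(u l) else u l) i * (fun l => if l = i then -(u l) else u l) j *
        K (fun l => if l = i then -(u l) else u l) = -(u i * u j * K u) := by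
    intro u
    have h2 : K (fun l => if l = i then -(u l) else u l) = K u := by
      rw [hK_sym, hK_sym]
      congr 2
      refine Finset.sum_congr rfl (fun l _ => ?_)
      by_cases hl : l = i <;> simp [hl]
    rw [h2]
    have hji : ¬ j = i := fun hh => hij hh.symm
    simp only [if_pos rfl, if_neg hji, if_true]
    ring
  rw [funext hc] at h  -- now h : ∫ -(..) = ∫ ..
  rw [integral_neg] at h
  linarith

lemma multilinear_expand {p : ℕ} (A2 : ContinuousMultilinearMap ℝ (fun _ : Fin 2 => (Fin p → ℝ)) ℝ)
    (u : Fin p → ℝ) :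
    A2 (fun _ => u) = ∑ r : Fin 2 → Fin p,
      (u (r 0) * u (r 1)) * A2 (fun kk => Pi.single (r kk) 1) := by
  classical
  have hsingle : ∀ i : Fin p, u i • (Pi.single i 1 : Fin p → ℝ) = (Pi.single i (u i) : Fin p → ℝ) := by
    intro i
    rw [← Pi.single_smul]
    simp
  have hu2 : ∑ i : Fin p, u i • (Pi.single i 1 : Fin p → ℝ) = u := by
    simp only [hsingle]
    exact Finset.univ_sum_single u
  have hfun : (fun _ : Fin 2 => u) = fun _ : Fin 2 => ∑ i : Fin p, u i • (Pi.single i 1 : Fin p → ℝ) := by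
    funext kk; exact hu2.symm
  rw [hfun]
  have h3 := A2.toMultilinearMap.map_sum
    (g := fun (_ : Fin 2) (i : Fin p) => u i • (Pi.single i 1 : Fin p → ℝ))
  simp only [ContinuousMultilinearMap.coe_coe] at h3
  rw [h3]
  refine Finset.sum_congr rfl (fun r _ => ?_)
  have h4 := A2.map_smul_univ (fun kk => u (r kk)) (fun kk => (Pi.single (r kk) 1 : Fin p → ℝ))
  calc A2 (fun kk => u (r kk) • (Pi.single (r kk) 1 : Fin p → ℝ))
      = (∏ kk : Fin 2, u (r kk)) • A2 (fun kk => (Pi.single (r kk) 1 : Fin p → ℝ)) := h4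
    _ = (u (r 0) * u (r 1)) * A2 (fun kk => Pi.single (r kk) 1) := by
        rw [Fin.prod_univ_two, smul_eq_mul]

lemma integral_Qexp {p : ℕ} (hp : 0 < p) (K : (Fin p → ℝ) → ℝ) (k : ℝ → ℝ)
    (hK_sym : ∀ u, K u = k (Real.sqrt (∑ i, u i ^ 2)))
    (hint : ∀ i j : Fin p, Integrable (fun u : Fin p → ℝ => u i * u j * K u) volume)
    (A2 : ContinuousMultilinearMap ℝ (fun _ : Fin 2 => (Fin p → ℝ)) ℝ) :
    ∫ u : Fin p → ℝ, A2 (fun _ => u) * K u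
      = (∫ u : Fin p → ℝ, u ⟨0, hp⟩ ^ 2 * K u) *
          ∑ i : Fin p, A2 (fun _ => (Pi.single i 1 : Fin p → ℝ)) := by
  classical
  set μ2 : ℝ := ∫ u : Fin p → ℝ, u ⟨0, hp⟩ ^ 2 * K u with hμ2
  have hexp : (fun u : Fin p → ℝ => A2 (fun _ => u) * K u)
      = fun u => ∑ r : Fin 2 → Fin p,
          (u (r 0) * u (r 1) * K u) * A2 (fun kk => (Pi.single (r kk) 1 : Fin p → ℝ)) := by
    funext u
    rw [multilinear_expand, Finset.sum_mul]
    exact Finset.sum_congr rfl (fun r _ => by ring)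
  rw [hexp, integral_finset_sum _ (fun r _ => ((hint (r 0) (r 1)).mul_const _))]
  simp only [MeasureTheory.integral_mul_const]
  have hval : ∀ r : Fin 2 → Fin p,
      (∫ u : Fin p → ℝ, u (r 0) * u (r 1) * K u) = if r 0 = r 1 then μ2 else 0 := by
    intro r
    by_cases hr : r 0 = r 1
    · rw [if_pos hr]
      have heq : (fun u : Fin p → ℝ => u (r 0) * u (r 1) * K u)
          = fun u => u (r 1) ^ 2 * K u := by
        funext u; rw [hr]; ring
      rw [heq, integral_sq_coord hp K k hK_sym]
    · rw [if_neg hr]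
      exact integral_offdiag K k hK_sym hr
  have hterm : ∀ r : Fin 2 → Fin p,
      (∫ u : Fin p → ℝ, u (r 0) * u (r 1) * K u) *
          A2 (fun kk => (Pi.single (r kk) 1 : Fin p → ℝ))
        = (if r 0 = r 1 then μ2 * A2 (fun _ => (Pi.single (r 0) 1 : Fin p → ℝ)) else 0) := by
    intro r
    rw [hval r]
    by_cases hr : r 0 = r 1
    · rw [if_pos hr, if_pos hr]
      have hfe : (fun kk : Fin 2 => (Pi.single (r kk) 1 : Fin p → ℝ))
          = fun _ => (Pi.single (r 0) 1 : Fin p → ℝ) := by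
        funext kk
        fin_cases kk
        · rfl
        · show (Pi.single (r 1) 1 : Fin p → ℝ) = _
          rw [← hr]
      rw [hfe]
    · rw [if_neg hr, if_neg hr, zero_mul]
  rw [Finset.sum_congr rfl (fun r _ => hterm r)]
  rw [Fintype.sum_equiv (finTwoArrowEquiv (Fin p))
    (fun r => if r 0 = r 1 then μ2 * A2 (fun _ => (Pi.single (r 0) 1 : Fin p → ℝ)) else 0)
    (fun ij => if ij.1 = ij.2 then μ2 * A2 (fun _ => (Pi.single ij.1 1 : Fin p → ℝ)) else 0)
    (fun r => rfl)]
  rw [Fintype.sum_prod_type]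
  simp only [Finset.sum_ite_eq, Finset.mem_univ, if_true]
  rw [Finset.mul_sum]

set_option maxHeartbeats 2000000 in
theorem stmt8 (p : ℕ) (hp : 0 < p)
    (K : (Fin p → ℝ) → ℝ) (hK_nonneg : ∀ u, 0 ≤ K u)
    (k : ℝ → ℝ) (hK_sym : ∀ u, K u = k (Real.sqrt (∑ i, u i ^ 2)))
    (hK_int : Integrable (fun u : Fin p → ℝ => (1 + (∑ i, u i ^ 2) ^ 3) * K u) volume)
    (m : (Fin p → ℝ) → ℝ) (hm : ContDiff ℝ 4 m)
    (hm_bdd : ∀ i : ℕ, 1 ≤ i → i ≤ 4 → ∃ C, ∀ y, ‖iteratedFDeriv ℝ i m y‖ ≤ C)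
    (f : (Fin p → ℝ) → ℝ) (hf : ContDiff ℝ 2 f)
    (hf_bdd : ∀ i : ℕ, 1 ≤ i → i ≤ 2 → ∃ C, ∀ y, ‖iteratedFDeriv ℝ i f y‖ ≤ C)
    (x : Fin p → ℝ) :
    ∃ C > 0, ∃ h₀ > 0, ∀ h : ℝ, 0 < h → h ≤ h₀ →
      |(∫ u : Fin p → ℝ,
          (m (x + h • u) - m x - h * fderiv ℝ m x u) * (K u * f (x + h • u))) -
          h ^ 2 / 2 * (∫ u : Fin p → ℝ, u ⟨0, hp⟩ ^ 2 * K u) * f x *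
            (∑ i : Fin p, iteratedFDeriv ℝ 2 m x ![Pi.single i 1, Pi.single i 1])|
        ≤ C * h ^ 4 := by
  classical
  obtain ⟨Cm2, hCm2⟩ := hm_bdd 2 (by norm_num) (by norm_num)
  obtain ⟨Cm3, hCm3⟩ := hm_bdd 3 (by norm_num) (by norm_num)
  obtain ⟨Cm4, hCm4⟩ := hm_bdd 4 (by norm_num) (by norm_num)
  obtain ⟨Cf1, hCf1⟩ := hf_bdd 1 (by norm_num) (by norm_num)
  obtain ⟨Cf2, hCf2⟩ := hf_bdd 2 (by norm_num) (by norm_num)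
  have hCm2n : 0 ≤ Cm2 := le_trans (norm_nonneg _) (hCm2 0)
  have hCm3n : 0 ≤ Cm3 := le_trans (norm_nonneg _) (hCm3 0)
  have hCm4n : 0 ≤ Cm4 := le_trans (norm_nonneg _) (hCm4 0)
  have hCf1n : 0 ≤ Cf1 := le_trans (norm_nonneg _) (hCf1 0)
  have hCf2n : 0 ≤ Cf2 := le_trans (norm_nonneg _) (hCf2 0)
  have hs0 : ∀ u : Fin p → ℝ, 0 ≤ ∑ i, u i ^ 2 :=
    fun u => Finset.sum_nonneg fun i _ => sq_nonneg _
  -- norm bounds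
  have hnorm_sq : ∀ u : Fin p → ℝ, ‖u‖ ^ 2 ≤ ∑ i, u i ^ 2 := by
    intro u
    have h1 : ‖u‖ ≤ Real.sqrt (∑ i, u i ^ 2) := by
      refine (pi_norm_le_iff_of_nonneg (Real.sqrt_nonneg _)).mpr fun i => ?_
      rw [Real.norm_eq_abs, ← Real.sqrt_sq_eq_abs]
      exact Real.sqrt_le_sqrt (Finset.single_le_sum
        (f := fun i => u i ^ 2) (fun i _ => sq_nonneg _) (Finset.mem_univ i))
    calc ‖u‖ ^ 2 ≤ Real.sqrt (∑ i, u i ^ 2) ^ 2 := by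
          exact pow_le_pow_left₀ (norm_nonneg u) h1 2
      _ = ∑ i, u i ^ 2 := Real.sq_sqrt (hs0 u)
  have hpow : ∀ (u : Fin p → ℝ) (j : ℕ), j ≤ 6 →
      ‖u‖ ^ j ≤ 1 + (∑ i, u i ^ 2) ^ 3 := by
    intro u j hj
    have hsnn := pow_nonneg (hs0 u) 3
    have h6 : ‖u‖ ^ 6 ≤ (∑ i, u i ^ 2) ^ 3 := by
      calc ‖u‖ ^ 6 = (‖u‖ ^ 2) ^ 3 := by ring
        _ ≤ (∑ i, u i ^ 2) ^ 3 := pow_le_pow_left₀ (by positivity) (hnorm_sq u) 3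
    rcases le_or_gt ‖u‖ 1 with hle | hgt
    · have h2 : ‖u‖ ^ j ≤ 1 := pow_le_one₀ (norm_nonneg u) hle
      linarith
    · have h2 : ‖u‖ ^ j ≤ ‖u‖ ^ 6 := pow_le_pow_right₀ hgt.le hj
      linarith
  have habsc : ∀ (u : Fin p → ℝ) (i : Fin p), |u i| ≤ ‖u‖ := by
    intro u i; simpa [Real.norm_eq_abs] using norm_le_pi_norm u i
  -- measurability of K
  have hKm : AEStronglyMeasurable K volume := by
    have hc : Continuous fun u : Fin p → ℝ => (1 + (∑ i, u i ^ 2) ^ 3)⁻¹ := by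
      have hc2 : Continuous fun u : Fin p → ℝ => 1 + (∑ i, u i ^ 2) ^ 3 := by
        refine continuous_const.add (Continuous.pow ?_ 3)
        exact continuous_finset_sum _ fun i _ => (continuous_apply i).pow 2
      refine hc2.inv₀ fun u => ?_
      have := pow_nonneg (hs0 u) 3
      intro hzero
      nlinarith [hzero]
    have h2 := hc.aestronglyMeasurable.mul hK_int.aestronglyMeasurable
    refine h2.congr (Filter.Eventually.of_forall fun u => ?_)
    have hne : (1 + (∑ i, u i ^ 2) ^ 3) ≠ 0 := by
      have := pow_nonneg (hs0 u) 3; intro hzero; nlinarith [hzero]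
    simp only [Pi.mul_apply]
    field_simp
  -- integrability helper
  have hIntB : ∀ (g : (Fin p → ℝ) → ℝ) (c : ℝ), AEStronglyMeasurable g volume →
      (∀ u, |g u| ≤ c * ((1 + (∑ i, u i ^ 2) ^ 3) * K u)) → Integrable g volume := by
    intro g c hgm hb
    refine Integrable.mono' (hK_int.const_mul c) hgm
      (Filter.Eventually.of_forall fun u => ?_)
    simpa [Real.norm_eq_abs] using hb u
  -- op-norm bounds
  have hQb : ∀ u : Fin p → ℝ, |iteratedFDeriv ℝ 2 m x (fun _ => u)| ≤ Cm2 * ‖u‖ ^ 2 := by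
    intro u
    have h := (iteratedFDeriv ℝ 2 m x).le_opNorm (fun _ => u)
    have h2 : ‖iteratedFDeriv ℝ 2 m x‖ * ∏ _i : Fin 2, ‖u‖ ≤ Cm2 * ‖u‖ ^ 2 := by
      rw [Finset.prod_const, Finset.card_univ, Fintype.card_fin]
      exact mul_le_mul_of_nonneg_right (hCm2 x) (by positivity)
    calc |iteratedFDeriv ℝ 2 m x (fun _ => u)|
        = ‖iteratedFDeriv ℝ 2 m x (fun _ => u)‖ := (Real.norm_eq_abs _).symm
      _ ≤ ‖iteratedFDeriv ℝ 2 m x‖ * ∏ _i : Fin 2, ‖u‖ := h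
      _ ≤ Cm2 * ‖u‖ ^ 2 := h2
  have hCub : ∀ u : Fin p → ℝ, |iteratedFDeriv ℝ 3 m x (fun _ => u)| ≤ Cm3 * ‖u‖ ^ 3 := by
    intro u
    have h := (iteratedFDeriv ℝ 3 m x).le_opNorm (fun _ => u)
    have h2 : ‖iteratedFDeriv ℝ 3 m x‖ * ∏ _i : Fin 3, ‖u‖ ≤ Cm3 * ‖u‖ ^ 3 := by
      rw [Finset.prod_const, Finset.card_univ, Fintype.card_fin]
      exact mul_le_mul_of_nonneg_right (hCm3 x) (by positivity)
    calc |iteratedFDeriv ℝ 3 m x (fun _ => u)|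
        = ‖iteratedFDeriv ℝ 3 m x (fun _ => u)‖ := (Real.norm_eq_abs _).symm
      _ ≤ ‖iteratedFDeriv ℝ 3 m x‖ * ∏ _i : Fin 3, ‖u‖ := h
      _ ≤ Cm3 * ‖u‖ ^ 3 := h2
  have hDfb : ∀ u : Fin p → ℝ, |fderiv ℝ f x u| ≤ Cf1 * ‖u‖ := by
    intro u
    have h1 : fderiv ℝ f x u = iteratedFDeriv ℝ 1 f x (fun _ => u) :=
      (iteratedFDeriv_one_apply (fun _ => u)).symm
    rw [h1]
    have h := (iteratedFDeriv ℝ 1 f x).le_opNorm (fun _ => u)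
    have h2 : ‖iteratedFDeriv ℝ 1 f x‖ * ∏ _i : Fin 1, ‖u‖ ≤ Cf1 * ‖u‖ := by
      rw [Finset.prod_const, Finset.card_univ, Fintype.card_fin, pow_one]
      exact mul_le_mul_of_nonneg_right (hCf1 x) (norm_nonneg u)
    calc |iteratedFDeriv ℝ 1 f x (fun _ => u)|
        = ‖iteratedFDeriv ℝ 1 f x (fun _ => u)‖ := (Real.norm_eq_abs _).symm
      _ ≤ ‖iteratedFDeriv ℝ 1 f x‖ * ∏ _i : Fin 1, ‖u‖ := h
      _ ≤ Cf1 * ‖u‖ := h2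
  -- smul expansion
  have hsm : ∀ (j : ℕ) (A : ContinuousMultilinearMap ℝ (fun _ : Fin j => (Fin p → ℝ)) ℝ)
      (c : ℝ) (u : Fin p → ℝ), A (fun _ => c • u) = c ^ j * A (fun _ => u) := by
    intro j A c u
    have h := A.map_smul_univ (fun _ => c) (fun _ => u)
    simpa [Finset.prod_const, Finset.card_univ, Fintype.card_fin, smul_eq_mul] using h
  -- Taylor estimates
  have hTm : ∀ (h : ℝ), 0 ≤ h → ∀ u : Fin p → ℝ,
      |m (x + h • u) - (m x + h * fderiv ℝ m x u
          + h ^ 2 / 2 * iteratedFDeriv ℝ 2 m x (fun _ => u)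
          + h ^ 3 / 6 * iteratedFDeriv ℝ 3 m x (fun _ => u))|
        ≤ Cm4 / 6 * (h ^ 4 * ‖u‖ ^ 4) := by
    intro h hh u
    have hm' : ContDiff ℝ ((3 : ℕ) + 1 : ℕ) m := by exact_mod_cast hm
    have ht := taylor_line m 3 hm' hCm4 x (h • u)
    have hsum : ∑ j ∈ Finset.range (3 + 1), (↑(Nat.factorial j))⁻¹ *
        iteratedFDeriv ℝ j m x (fun _ => h • u)
        = m x + h * fderiv ℝ m x u + h ^ 2 / 2 * iteratedFDeriv ℝ 2 m x (fun _ => u)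
          + h ^ 3 / 6 * iteratedFDeriv ℝ 3 m x (fun _ => u) := by
      rw [Finset.sum_range_succ, Finset.sum_range_succ, Finset.sum_range_succ,
        Finset.sum_range_one]
      rw [hsm 2 (iteratedFDeriv ℝ 2 m x) h u, hsm 3 (iteratedFDeriv ℝ 3 m x) h u]
      rw [iteratedFDeriv_zero_apply, iteratedFDeriv_one_apply]
      simp only [_root_.map_smul, smul_eq_mul, Nat.factorial]
      push_cast
      ring
    rw [hsum] at ht
    have hnv : ‖h • u‖ = h * ‖u‖ := by
      rw [norm_smul, Real.norm_eq_abs, abs_of_nonneg hh]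
    have h2 : Cm4 * ‖h • u‖ ^ 4 / ↑(Nat.factorial 3) = Cm4 / 6 * (h ^ 4 * ‖u‖ ^ 4) := by
      rw [hnv]
      simp only [Nat.factorial]
      push_cast
      ring
    rw [h2] at ht
    convert ht using 2
  have hTf : ∀ (h : ℝ), 0 ≤ h → ∀ u : Fin p → ℝ,
      |f (x + h • u) - (f x + h * fderiv ℝ f x u)| ≤ Cf2 * (h ^ 2 * ‖u‖ ^ 2) := by
    intro h hh u
    have hf' : ContDiff ℝ ((1 : ℕ) + 1 : ℕ) f := by exact_mod_cast hf
    have ht := taylor_line f 1 hf' hCf2 x (h • u)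
    have hsum : ∑ j ∈ Finset.range (1 + 1), (↑(Nat.factorial j))⁻¹ *
        iteratedFDeriv ℝ j f x (fun _ => h • u)
        = f x + h * fderiv ℝ f x u := by
      rw [Finset.sum_range_succ, Finset.sum_range_one]
      rw [iteratedFDeriv_zero_apply, iteratedFDeriv_one_apply]
      simp only [_root_.map_smul, smul_eq_mul, Nat.factorial]
      push_cast
      ring
    rw [hsum] at ht
    have hnv : ‖h • u‖ = h * ‖u‖ := by
      rw [norm_smul, Real.norm_eq_abs, abs_of_nonneg hh]
    have h2 : Cf2 * ‖h • u‖ ^ 2 / ↑(Nat.factorial 1) = Cf2 * (h ^ 2 * ‖u‖ ^ 2) := by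
      rw [hnv]
      simp only [Nat.factorial]
      push_cast
      ring
    rw [h2] at ht
    exact ht
  -- symmetry facts
  have hKneg : ∀ u : Fin p → ℝ, K (-u) = K u := by
    intro u
    rw [hK_sym, hK_sym]
    congr 2
    refine Finset.sum_congr rfl fun i _ => ?_
    simp
  have hQneg : ∀ u : Fin p → ℝ,
      iteratedFDeriv ℝ 2 m x (fun _ => -u) = iteratedFDeriv ℝ 2 m x (fun _ => u) := by
    intro u
    have h := hsm 2 (iteratedFDeriv ℝ 2 m x) (-1) u
    rw [show ((-1 : ℝ) • u) = -u from by simp] at h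
    rw [h]; norm_num
  have hCuneg : ∀ u : Fin p → ℝ,
      iteratedFDeriv ℝ 3 m x (fun _ => -u) = -iteratedFDeriv ℝ 3 m x (fun _ => u) := by
    intro u
    have h := hsm 3 (iteratedFDeriv ℝ 3 m x) (-1) u
    rw [show ((-1 : ℝ) • u) = -u from by simp] at h
    rw [h]; norm_num
  -- continuity
  have hQc : Continuous fun u : Fin p → ℝ => iteratedFDeriv ℝ 2 m x (fun _ => u) :=
    (iteratedFDeriv ℝ 2 m x).cont.comp (continuous_pi fun _ => continuous_id)
  have hCuc : Continuous fun u : Fin p → ℝ => iteratedFDeriv ℝ 3 m x (fun _ => u) :=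
    (iteratedFDeriv ℝ 3 m x).cont.comp (continuous_pi fun _ => continuous_id)
  -- integrability facts
  have hint_ij : ∀ i j : Fin p,
      Integrable (fun u : Fin p → ℝ => u i * u j * K u) volume := by
    intro i j
    refine hIntB _ 1 (((continuous_apply i).mul
      (continuous_apply j)).aestronglyMeasurable.mul hKm) fun u => ?_
    have h1 : |u i * u j| ≤ ‖u‖ ^ 2 := by
      rw [abs_mul]
      calc |u i| * |u j| ≤ ‖u‖ * ‖u‖ :=
            mul_le_mul (habsc u i) (habsc u j) (abs_nonneg _) (norm_nonneg u)
        _ = ‖u‖ ^ 2 := by ring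
    have h2 : ‖u‖ ^ 2 ≤ 1 + (∑ i, u i ^ 2) ^ 3 := hpow u 2 (by norm_num)
    calc |u i * u j * K u| = |u i * u j| * K u := by
          rw [abs_mul, abs_of_nonneg (hK_nonneg u)]
      _ ≤ (1 + (∑ i, u i ^ 2) ^ 3) * K u :=
          mul_le_mul_of_nonneg_right (le_trans h1 h2) (hK_nonneg u)
      _ = 1 * ((1 + (∑ i, u i ^ 2) ^ 3) * K u) := by ring
  have hQK_int : Integrable
      (fun u : Fin p → ℝ => iteratedFDeriv ℝ 2 m x (fun _ => u) * K u) volume := by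
    refine hIntB _ Cm2 (hQc.aestronglyMeasurable.mul hKm) fun u => ?_
    have h2 : ‖u‖ ^ 2 ≤ 1 + (∑ i, u i ^ 2) ^ 3 := hpow u 2 (by norm_num)
    calc |iteratedFDeriv ℝ 2 m x (fun _ => u) * K u|
        = |iteratedFDeriv ℝ 2 m x (fun _ => u)| * K u := by
          rw [abs_mul, abs_of_nonneg (hK_nonneg u)]
      _ ≤ (Cm2 * (1 + (∑ i, u i ^ 2) ^ 3)) * K u := by
          refine mul_le_mul_of_nonneg_right ?_ (hK_nonneg u)
          exact le_trans (hQb u) (mul_le_mul_of_nonneg_left h2 hCm2n)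
      _ = Cm2 * ((1 + (∑ i, u i ^ 2) ^ 3) * K u) := by ring
  have hP3_int : Integrable (fun u : Fin p → ℝ =>
      (iteratedFDeriv ℝ 2 m x (fun _ => u) * fderiv ℝ f x u / 2
        + iteratedFDeriv ℝ 3 m x (fun _ => u) * f x / 6) * K u) volume := by
    refine hIntB _ (Cm2 * Cf1 / 2 + Cm3 * |f x| / 6)
      ((((hQc.mul (fderiv ℝ f x).continuous).div_const 2).add
        ((hCuc.mul continuous_const).div_const 6)).aestronglyMeasurable.mul hKm) fun u => ?_
    have h3 : ‖u‖ ^ 3 ≤ 1 + (∑ i, u i ^ 2) ^ 3 := hpow u 3 (by norm_num)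
    have hb : |iteratedFDeriv ℝ 2 m x (fun _ => u) * fderiv ℝ f x u / 2
        + iteratedFDeriv ℝ 3 m x (fun _ => u) * f x / 6|
        ≤ (Cm2 * Cf1 / 2 + Cm3 * |f x| / 6) * (1 + (∑ i, u i ^ 2) ^ 3) := by
      have hA : |iteratedFDeriv ℝ 2 m x (fun _ => u) * fderiv ℝ f x u / 2|
          = |iteratedFDeriv ℝ 2 m x (fun _ => u)| * |fderiv ℝ f x u| / 2 := by
        rw [abs_div, abs_mul]; norm_num
      have hB : |iteratedFDeriv ℝ 3 m x (fun _ => u) * f x / 6|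
          = |iteratedFDeriv ℝ 3 m x (fun _ => u)| * |f x| / 6 := by
        rw [abs_div, abs_mul]; norm_num
      have p1 : |iteratedFDeriv ℝ 2 m x (fun _ => u)| * |fderiv ℝ f x u|
          ≤ (Cm2 * ‖u‖ ^ 2) * (Cf1 * ‖u‖) :=
        mul_le_mul (hQb u) (hDfb u) (abs_nonneg _) (mul_nonneg hCm2n (by positivity))
      have p2 : |iteratedFDeriv ℝ 3 m x (fun _ => u)| * |f x|
          ≤ (Cm3 * ‖u‖ ^ 3) * |f x| :=
        mul_le_mul_of_nonneg_right (hCub u) (abs_nonneg _)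
      have c1 : (0:ℝ) ≤ Cm2 * Cf1 / 2 := by
        have := mul_nonneg hCm2n hCf1n; linarith
      have c2 : (0:ℝ) ≤ Cm3 * |f x| / 6 := by
        have := mul_nonneg hCm3n (abs_nonneg (f x)); linarith
      have q1 := mul_le_mul_of_nonneg_left h3 c1
      have q2 := mul_le_mul_of_nonneg_left h3 c2
      calc |iteratedFDeriv ℝ 2 m x (fun _ => u) * fderiv ℝ f x u / 2
          + iteratedFDeriv ℝ 3 m x (fun _ => u) * f x / 6|
          ≤ |iteratedFDeriv ℝ 2 m x (fun _ => u) * fderiv ℝ f x u / 2|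
            + |iteratedFDeriv ℝ 3 m x (fun _ => u) * f x / 6| := abs_add_le _ _
        _ ≤ (Cm2 * Cf1 / 2) * ‖u‖ ^ 3 + (Cm3 * |f x| / 6) * ‖u‖ ^ 3 := by
            rw [hA, hB]; nlinarith [p1, p2]
        _ ≤ (Cm2 * Cf1 / 2 + Cm3 * |f x| / 6) * (1 + (∑ i, u i ^ 2) ^ 3) := by
            nlinarith [q1, q2]
    calc |(iteratedFDeriv ℝ 2 m x (fun _ => u) * fderiv ℝ f x u / 2
        + iteratedFDeriv ℝ 3 m x (fun _ => u) * f x / 6) * K u|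
        = |iteratedFDeriv ℝ 2 m x (fun _ => u) * fderiv ℝ f x u / 2
            + iteratedFDeriv ℝ 3 m x (fun _ => u) * f x / 6| * K u := by
          rw [abs_mul, abs_of_nonneg (hK_nonneg u)]
      _ ≤ ((Cm2 * Cf1 / 2 + Cm3 * |f x| / 6) * (1 + (∑ i, u i ^ 2) ^ 3)) * K u :=
          mul_le_mul_of_nonneg_right hb (hK_nonneg u)
      _ = (Cm2 * Cf1 / 2 + Cm3 * |f x| / 6) * ((1 + (∑ i, u i ^ 2) ^ 3) * K u) := by ring
  -- integral identities
  have hIQ : ∫ u : Fin p → ℝ, iteratedFDeriv ℝ 2 m x (fun _ => u) * K u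
      = (∫ u : Fin p → ℝ, u ⟨0, hp⟩ ^ 2 * K u) *
          ∑ i : Fin p, iteratedFDeriv ℝ 2 m x (fun _ => (Pi.single i 1 : Fin p → ℝ)) :=
    integral_Qexp hp K k hK_sym hint_ij _
  have hIP3 : ∫ u : Fin p → ℝ,
      (iteratedFDeriv ℝ 2 m x (fun _ => u) * fderiv ℝ f x u / 2
        + iteratedFDeriv ℝ 3 m x (fun _ => u) * f x / 6) * K u = 0 := by
    apply integral_odd
    intro u
    have h3 : fderiv ℝ f x (-u) = -(fderiv ℝ f x u) := map_neg _ u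
    rw [hQneg u, hCuneg u, h3, hKneg u]
    ring
  -- Tr rewrite
  have hvec2 : ∀ y : Fin p → ℝ, (![y, y] : Fin 2 → (Fin p → ℝ)) = fun _ => y := by
    intro y; funext kk; fin_cases kk <;> rfl
  simp only [hvec2]
  -- constants
  have hWnonneg : ∀ u : Fin p → ℝ, 0 ≤ (1 + (∑ i, u i ^ 2) ^ 3) * K u := by
    intro u
    have h1 := pow_nonneg (hs0 u) 3
    exact mul_nonneg (by linarith) (hK_nonneg u)
  have hIWn : 0 ≤ ∫ u : Fin p → ℝ, (1 + (∑ i, u i ^ 2) ^ 3) * K u :=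
    integral_nonneg hWnonneg
  have hCEn : 0 ≤ Cm2 * Cf2 / 2 + Cm3 * (Cf1 + Cf2) / 6 + Cm4 / 6 * (|f x| + Cf1 + Cf2) :=
    add_nonneg (add_nonneg (div_nonneg (mul_nonneg hCm2n hCf2n) (by norm_num))
      (div_nonneg (mul_nonneg hCm3n (add_nonneg hCf1n hCf2n)) (by norm_num)))
      (mul_nonneg (div_nonneg hCm4n (by norm_num))
        (add_nonneg (add_nonneg (abs_nonneg _) hCf1n) hCf2n))
  refine ⟨(Cm2 * Cf2 / 2 + Cm3 * (Cf1 + Cf2) / 6 + Cm4 / 6 * (|f x| + Cf1 + Cf2)) *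
      (∫ u : Fin p → ℝ, (1 + (∑ i, u i ^ 2) ^ 3) * K u) + 1,
      by nlinarith [mul_nonneg hCEn hIWn], 1, one_pos, ?_⟩
  intro h hh0 hh1
  have hTaylorM := hTm h hh0.le
  have hTaylorF := hTf h hh0.le
  set Er : (Fin p → ℝ) → ℝ := fun u =>
    (m (x + h • u) - m x - h * fderiv ℝ m x u) * (K u * f (x + h • u))
    - (h ^ 2 / 2 * f x) * (iteratedFDeriv ℝ 2 m x (fun _ => u) * K u)
    - h ^ 3 * ((iteratedFDeriv ℝ 2 m x (fun _ => u) * fderiv ℝ f x u / 2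
        + iteratedFDeriv ℝ 3 m x (fun _ => u) * f x / 6) * K u) with hErd
  -- pointwise bound on Er
  have hptErB : ∀ u : Fin p → ℝ, |Er u|
      ≤ ((Cm2 * Cf2 / 2 + Cm3 * (Cf1 + Cf2) / 6 + Cm4 / 6 * (|f x| + Cf1 + Cf2)) * h ^ 4) *
        ((1 + (∑ i, u i ^ 2) ^ 3) * K u) := by
    intro u
    have hq := hQb u
    have hcu := hCub u
    have hdf := hDfb u
    have hrm := hTaylorM u
    have hrf := hTaylorF u
    have n4 : ‖u‖ ^ 4 ≤ 1 + (∑ i, u i ^ 2) ^ 3 := hpow u 4 (by norm_num)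
    have n5 : ‖u‖ ^ 5 ≤ 1 + (∑ i, u i ^ 2) ^ 3 := hpow u 5 (by norm_num)
    have n6 : ‖u‖ ^ 6 ≤ 1 + (∑ i, u i ^ 2) ^ 3 := hpow u 6 (by norm_num)
    obtain ⟨rm, hrmd⟩ : ∃ r : ℝ, r = m (x + h • u) - (m x + h * fderiv ℝ m x u
        + h ^ 2 / 2 * iteratedFDeriv ℝ 2 m x (fun _ => u)
        + h ^ 3 / 6 * iteratedFDeriv ℝ 3 m x (fun _ => u)) := ⟨_, rfl⟩
    obtain ⟨rf, hrfd⟩ : ∃ r : ℝ, r = f (x + h • u) - (f x + h * fderiv ℝ f x u) := ⟨_, rfl⟩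
    rw [← hrmd] at hrm
    rw [← hrfd] at hrf
    have hh2 : h ^ 2 ≤ h := by nlinarith
    have hrf' : |rf| ≤ Cf2 * (h * ‖u‖ ^ 2) := by
      refine le_trans hrf (mul_le_mul_of_nonneg_left ?_ hCf2n)
      exact mul_le_mul_of_nonneg_right hh2 (by positivity)
    have hID : Er u = K u * ((h ^ 2 / 2 * iteratedFDeriv ℝ 2 m x (fun _ => u)) * rf
        + (h ^ 3 / 6 * iteratedFDeriv ℝ 3 m x (fun _ => u)) * (h * fderiv ℝ f x u + rf)
        + rm * (f x + h * fderiv ℝ f x u + rf)) := by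
      simp only [hErd, hrmd, hrfd]
      ring
    have hsum_f : |h * fderiv ℝ f x u + rf| ≤ h * (Cf1 * ‖u‖ + Cf2 * ‖u‖ ^ 2) := by
      have ha := abs_add_le (h * fderiv ℝ f x u) rf
      have hb : |h * fderiv ℝ f x u| ≤ h * (Cf1 * ‖u‖) := by
        rw [abs_mul, abs_of_nonneg hh0.le]
        exact mul_le_mul_of_nonneg_left hdf hh0.le
      have : Cf2 * (h * ‖u‖ ^ 2) = h * (Cf2 * ‖u‖ ^ 2) := by ring
      rw [this] at hrf'
      calc |h * fderiv ℝ f x u + rf| ≤ |h * fderiv ℝ f x u| + |rf| := ha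
        _ ≤ h * (Cf1 * ‖u‖) + h * (Cf2 * ‖u‖ ^ 2) := add_le_add hb hrf'
        _ = h * (Cf1 * ‖u‖ + Cf2 * ‖u‖ ^ 2) := by ring
    have hFb : |f x + h * fderiv ℝ f x u + rf| ≤ |f x| + Cf1 * ‖u‖ + Cf2 * ‖u‖ ^ 2 := by
      have ha : |f x + h * fderiv ℝ f x u + rf| ≤ |f x| + |h * fderiv ℝ f x u + rf| := by
        have := abs_add_le (f x) (h * fderiv ℝ f x u + rf)
        calc |f x + h * fderiv ℝ f x u + rf|
            = |f x + (h * fderiv ℝ f x u + rf)| := by ring_nf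
          _ ≤ |f x| + |h * fderiv ℝ f x u + rf| := abs_add_le _ _
      have hc1 : 0 ≤ Cf1 * ‖u‖ + Cf2 * ‖u‖ ^ 2 := by
        have := mul_nonneg hCf1n (norm_nonneg u)
        have := mul_nonneg hCf2n (pow_nonneg (norm_nonneg u) 2)
        linarith
      have hb : h * (Cf1 * ‖u‖ + Cf2 * ‖u‖ ^ 2) ≤ Cf1 * ‖u‖ + Cf2 * ‖u‖ ^ 2 := by
        nlinarith
      calc |f x + h * fderiv ℝ f x u + rf|
          ≤ |f x| + |h * fderiv ℝ f x u + rf| := ha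
        _ ≤ |f x| + h * (Cf1 * ‖u‖ + Cf2 * ‖u‖ ^ 2) := by linarith [hsum_f]
        _ ≤ |f x| + Cf1 * ‖u‖ + Cf2 * ‖u‖ ^ 2 := by linarith
    -- three term bounds
    have t1 : |(h ^ 2 / 2 * iteratedFDeriv ℝ 2 m x (fun _ => u)) * rf|
        ≤ (h ^ 2 / 2 * (Cm2 * ‖u‖ ^ 2)) * (Cf2 * (h ^ 2 * ‖u‖ ^ 2)) := by
      rw [abs_mul]
      refine mul_le_mul ?_ hrf (abs_nonneg _) (by positivity)
      rw [abs_mul, abs_of_nonneg (by positivity : (0:ℝ) ≤ h ^ 2 / 2)]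
      exact mul_le_mul_of_nonneg_left hq (by positivity)
    have t2 : |(h ^ 3 / 6 * iteratedFDeriv ℝ 3 m x (fun _ => u)) * (h * fderiv ℝ f x u + rf)|
        ≤ (h ^ 3 / 6 * (Cm3 * ‖u‖ ^ 3)) * (h * (Cf1 * ‖u‖ + Cf2 * ‖u‖ ^ 2)) := by
      rw [abs_mul]
      refine mul_le_mul ?_ hsum_f (abs_nonneg _) ?_
      · rw [abs_mul, abs_of_nonneg (by positivity : (0:ℝ) ≤ h ^ 3 / 6)]
        exact mul_le_mul_of_nonneg_left hcu (by positivity)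
      · have h1 := mul_nonneg hCm3n (pow_nonneg (norm_nonneg u) 3)
        positivity
    have t3 : |rm * (f x + h * fderiv ℝ f x u + rf)|
        ≤ (Cm4 / 6 * (h ^ 4 * ‖u‖ ^ 4)) * (|f x| + Cf1 * ‖u‖ + Cf2 * ‖u‖ ^ 2) := by
      rw [abs_mul]
      refine mul_le_mul hrm hFb (abs_nonneg _) ?_
      have := div_nonneg hCm4n (by norm_num : (0:ℝ) ≤ 6)
      positivity
    -- combine
    have hXb : |(h ^ 2 / 2 * iteratedFDeriv ℝ 2 m x (fun _ => u)) * rf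
        + (h ^ 3 / 6 * iteratedFDeriv ℝ 3 m x (fun _ => u)) * (h * fderiv ℝ f x u + rf)
        + rm * (f x + h * fderiv ℝ f x u + rf)|
        ≤ (h ^ 2 / 2 * (Cm2 * ‖u‖ ^ 2)) * (Cf2 * (h ^ 2 * ‖u‖ ^ 2))
          + (h ^ 3 / 6 * (Cm3 * ‖u‖ ^ 3)) * (h * (Cf1 * ‖u‖ + Cf2 * ‖u‖ ^ 2))
          + (Cm4 / 6 * (h ^ 4 * ‖u‖ ^ 4)) * (|f x| + Cf1 * ‖u‖ + Cf2 * ‖u‖ ^ 2) := by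
      calc |(h ^ 2 / 2 * iteratedFDeriv ℝ 2 m x (fun _ => u)) * rf
          + (h ^ 3 / 6 * iteratedFDeriv ℝ 3 m x (fun _ => u)) * (h * fderiv ℝ f x u + rf)
          + rm * (f x + h * fderiv ℝ f x u + rf)|
          ≤ |(h ^ 2 / 2 * iteratedFDeriv ℝ 2 m x (fun _ => u)) * rf
            + (h ^ 3 / 6 * iteratedFDeriv ℝ 3 m x (fun _ => u)) * (h * fderiv ℝ f x u + rf)|
            + |rm * (f x + h * fderiv ℝ f x u + rf)| := abs_add_le _ _
        _ ≤ |(h ^ 2 / 2 * iteratedFDeriv ℝ 2 m x (fun _ => u)) * rf|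
            + |(h ^ 3 / 6 * iteratedFDeriv ℝ 3 m x (fun _ => u)) * (h * fderiv ℝ f x u + rf)|
            + |rm * (f x + h * fderiv ℝ f x u + rf)| := by
            linarith [abs_add_le ((h ^ 2 / 2 * iteratedFDeriv ℝ 2 m x (fun _ => u)) * rf)
              ((h ^ 3 / 6 * iteratedFDeriv ℝ 3 m x (fun _ => u)) * (h * fderiv ℝ f x u + rf))]
        _ ≤ _ := by linarith [t1, t2, t3]
    have m4 : h ^ 4 * ‖u‖ ^ 4 ≤ h ^ 4 * (1 + (∑ i, u i ^ 2) ^ 3) :=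
      mul_le_mul_of_nonneg_left n4 (by positivity)
    have m5 : h ^ 4 * ‖u‖ ^ 5 ≤ h ^ 4 * (1 + (∑ i, u i ^ 2) ^ 3) :=
      mul_le_mul_of_nonneg_left n5 (by positivity)
    have m6 : h ^ 4 * ‖u‖ ^ 6 ≤ h ^ 4 * (1 + (∑ i, u i ^ 2) ^ 3) :=
      mul_le_mul_of_nonneg_left n6 (by positivity)
    have c1 : (0:ℝ) ≤ Cm2 * Cf2 / 2 := by have := mul_nonneg hCm2n hCf2n; linarith
    have c2 : (0:ℝ) ≤ Cm3 * Cf1 / 6 := by have := mul_nonneg hCm3n hCf1n; linarith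
    have c3 : (0:ℝ) ≤ Cm3 * Cf2 / 6 := by have := mul_nonneg hCm3n hCf2n; linarith
    have c4 : (0:ℝ) ≤ Cm4 * |f x| / 6 := by
      have := mul_nonneg hCm4n (abs_nonneg (f x)); linarith
    have c5 : (0:ℝ) ≤ Cm4 * Cf1 / 6 := by have := mul_nonneg hCm4n hCf1n; linarith
    have c6 : (0:ℝ) ≤ Cm4 * Cf2 / 6 := by have := mul_nonneg hCm4n hCf2n; linarith
    have q1 := mul_le_mul_of_nonneg_left m4 c1
    have q2 := mul_le_mul_of_nonneg_left m4 c2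
    have q3 := mul_le_mul_of_nonneg_left m5 c3
    have q4 := mul_le_mul_of_nonneg_left m4 c4
    have q5 := mul_le_mul_of_nonneg_left m5 c5
    have q6 := mul_le_mul_of_nonneg_left m6 c6
    have hXfinal : (h ^ 2 / 2 * (Cm2 * ‖u‖ ^ 2)) * (Cf2 * (h ^ 2 * ‖u‖ ^ 2))
          + (h ^ 3 / 6 * (Cm3 * ‖u‖ ^ 3)) * (h * (Cf1 * ‖u‖ + Cf2 * ‖u‖ ^ 2))
          + (Cm4 / 6 * (h ^ 4 * ‖u‖ ^ 4)) * (|f x| + Cf1 * ‖u‖ + Cf2 * ‖u‖ ^ 2)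
        ≤ (Cm2 * Cf2 / 2 + Cm3 * (Cf1 + Cf2) / 6 + Cm4 / 6 * (|f x| + Cf1 + Cf2)) * h ^ 4 *
            (1 + (∑ i, u i ^ 2) ^ 3) := by
      have hLHS : (h ^ 2 / 2 * (Cm2 * ‖u‖ ^ 2)) * (Cf2 * (h ^ 2 * ‖u‖ ^ 2))
          + (h ^ 3 / 6 * (Cm3 * ‖u‖ ^ 3)) * (h * (Cf1 * ‖u‖ + Cf2 * ‖u‖ ^ 2))
          + (Cm4 / 6 * (h ^ 4 * ‖u‖ ^ 4)) * (|f x| + Cf1 * ‖u‖ + Cf2 * ‖u‖ ^ 2)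
          = Cm2 * Cf2 / 2 * (h ^ 4 * ‖u‖ ^ 4) + Cm3 * Cf1 / 6 * (h ^ 4 * ‖u‖ ^ 4)
            + Cm3 * Cf2 / 6 * (h ^ 4 * ‖u‖ ^ 5) + Cm4 * |f x| / 6 * (h ^ 4 * ‖u‖ ^ 4)
            + Cm4 * Cf1 / 6 * (h ^ 4 * ‖u‖ ^ 5) + Cm4 * Cf2 / 6 * (h ^ 4 * ‖u‖ ^ 6) := by
        ring
      rw [hLHS]
      have hRHS : (Cm2 * Cf2 / 2 + Cm3 * (Cf1 + Cf2) / 6 + Cm4 / 6 * (|f x| + Cf1 + Cf2)) *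
            h ^ 4 * (1 + (∑ i, u i ^ 2) ^ 3)
          = Cm2 * Cf2 / 2 * (h ^ 4 * (1 + (∑ i, u i ^ 2) ^ 3))
            + Cm3 * Cf1 / 6 * (h ^ 4 * (1 + (∑ i, u i ^ 2) ^ 3))
            + Cm3 * Cf2 / 6 * (h ^ 4 * (1 + (∑ i, u i ^ 2) ^ 3))
            + Cm4 * |f x| / 6 * (h ^ 4 * (1 + (∑ i, u i ^ 2) ^ 3))
            + Cm4 * Cf1 / 6 * (h ^ 4 * (1 + (∑ i, u i ^ 2) ^ 3))
            + Cm4 * Cf2 / 6 * (h ^ 4 * (1 + (∑ i, u i ^ 2) ^ 3)) := by ring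
      rw [hRHS]
      linarith
    rw [hID]
    calc |K u * ((h ^ 2 / 2 * iteratedFDeriv ℝ 2 m x (fun _ => u)) * rf
        + (h ^ 3 / 6 * iteratedFDeriv ℝ 3 m x (fun _ => u)) * (h * fderiv ℝ f x u + rf)
        + rm * (f x + h * fderiv ℝ f x u + rf))|
        = K u * |(h ^ 2 / 2 * iteratedFDeriv ℝ 2 m x (fun _ => u)) * rf
          + (h ^ 3 / 6 * iteratedFDeriv ℝ 3 m x (fun _ => u)) * (h * fderiv ℝ f x u + rf)
          + rm * (f x + h * fderiv ℝ f x u + rf)| := by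
          rw [abs_mul, abs_of_nonneg (hK_nonneg u)]
      _ ≤ K u * ((Cm2 * Cf2 / 2 + Cm3 * (Cf1 + Cf2) / 6 + Cm4 / 6 * (|f x| + Cf1 + Cf2)) *
            h ^ 4 * (1 + (∑ i, u i ^ 2) ^ 3)) :=
          mul_le_mul_of_nonneg_left (le_trans hXb hXfinal) (hK_nonneg u)
      _ = ((Cm2 * Cf2 / 2 + Cm3 * (Cf1 + Cf2) / 6 + Cm4 / 6 * (|f x| + Cf1 + Cf2)) * h ^ 4) *
            ((1 + (∑ i, u i ^ 2) ^ 3) * K u) := by ring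
  -- measurability and integrability of Er
  have hcont1 : Continuous fun u : Fin p → ℝ => x + h • u :=
    continuous_const.add (continuous_id.const_smul h)
  have hG_meas : AEStronglyMeasurable
      (fun u : Fin p → ℝ => (m (x + h • u) - m x - h * fderiv ℝ m x u) *
        (K u * f (x + h • u))) volume :=
    (((hm.continuous.comp hcont1).sub continuous_const).sub
      (continuous_const.mul (fderiv ℝ m x).continuous)).aestronglyMeasurable.mul
      (hKm.mul (hf.continuous.comp hcont1).aestronglyMeasurable)
  have hEr_meas : AEStronglyMeasurable Er volume := by
    rw [hErd]
    exact (hG_meas.sub ((hQK_int.aestronglyMeasurable).const_mul _)).sub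
      ((hP3_int.aestronglyMeasurable).const_mul _)
  have hEr_int : Integrable Er volume :=
    hIntB Er ((Cm2 * Cf2 / 2 + Cm3 * (Cf1 + Cf2) / 6 + Cm4 / 6 * (|f x| + Cf1 + Cf2)) * h ^ 4)
      hEr_meas hptErB
  have hGrepr : (fun u : Fin p → ℝ => (m (x + h • u) - m x - h * fderiv ℝ m x u) *
        (K u * f (x + h • u)))
      = fun u => ((h ^ 2 / 2 * f x) * (iteratedFDeriv ℝ 2 m x (fun _ => u) * K u)
          + h ^ 3 * ((iteratedFDeriv ℝ 2 m x (fun _ => u) * fderiv ℝ f x u / 2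
            + iteratedFDeriv ℝ 3 m x (fun _ => u) * f x / 6) * K u)) + Er u := by
    funext u
    simp only [hErd]
    ring
  have hsplit : (∫ u : Fin p → ℝ,
        (m (x + h • u) - m x - h * fderiv ℝ m x u) * (K u * f (x + h • u)))
      = (h ^ 2 / 2 * f x) * (∫ u : Fin p → ℝ, iteratedFDeriv ℝ 2 m x (fun _ => u) * K u)
        + h ^ 3 * (∫ u : Fin p → ℝ,
            (iteratedFDeriv ℝ 2 m x (fun _ => u) * fderiv ℝ f x u / 2
              + iteratedFDeriv ℝ 3 m x (fun _ => u) * f x / 6) * K u)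
        + ∫ u, Er u := by
    rw [hGrepr]
    rw [integral_add (f := fun u : Fin p → ℝ =>
        (h ^ 2 / 2 * f x) * (iteratedFDeriv ℝ 2 m x (fun _ => u) * K u)
          + h ^ 3 * ((iteratedFDeriv ℝ 2 m x (fun _ => u) * fderiv ℝ f x u / 2
            + iteratedFDeriv ℝ 3 m x (fun _ => u) * f x / 6) * K u)) (g := Er)
        ((hQK_int.const_mul _).add (hP3_int.const_mul _)) hEr_int]
    rw [integral_add (f := fun u : Fin p → ℝ =>
        (h ^ 2 / 2 * f x) * (iteratedFDeriv ℝ 2 m x (fun _ => u) * K u))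
        (g := fun u : Fin p → ℝ =>
          h ^ 3 * ((iteratedFDeriv ℝ 2 m x (fun _ => u) * fderiv ℝ f x u / 2
            + iteratedFDeriv ℝ 3 m x (fun _ => u) * f x / 6) * K u))
        (hQK_int.const_mul _) (hP3_int.const_mul _)]
    rw [MeasureTheory.integral_const_mul, MeasureTheory.integral_const_mul]
  have hkey : (∫ u : Fin p → ℝ,
        (m (x + h • u) - m x - h * fderiv ℝ m x u) * (K u * f (x + h • u)))
      - h ^ 2 / 2 * (∫ u : Fin p → ℝ, u ⟨0, hp⟩ ^ 2 * K u) * f x *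
          (∑ i : Fin p, iteratedFDeriv ℝ 2 m x fun _ => Pi.single i 1)
      = ∫ u, Er u := by
    rw [hsplit, hIQ, hIP3]
    ring
  rw [hkey]
  have habs : |∫ u, Er u| ≤ ∫ u, |Er u| := by
    simpa [Real.norm_eq_abs] using norm_integral_le_integral_norm Er
  have hmono : ∫ u, |Er u| ≤ ∫ u : Fin p → ℝ,
      ((Cm2 * Cf2 / 2 + Cm3 * (Cf1 + Cf2) / 6 + Cm4 / 6 * (|f x| + Cf1 + Cf2)) * h ^ 4) *
        ((1 + (∑ i, u i ^ 2) ^ 3) * K u) :=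
    integral_mono hEr_int.abs (hK_int.const_mul _) hptErB
  rw [MeasureTheory.integral_const_mul] at hmono
  have hh4 : (0:ℝ) ≤ h ^ 4 := by positivity
  have := mul_nonneg hCEn hIWn
  nlinarith [habs, hmono, mul_nonneg hCEn hh4]
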